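/- Let q be a power of a prime p and let G be a subgroup of PGL₂(F_q) of order p^r with r ≥ 2. Then there is no monic irreducible polynomial f ∈ F_q[x] of degree ≥ 2 such that [A]∘f = f for every [A] ∈ G. -/

import Mathlib

open Polynomial

noncomputable section

namespace PGLAct

variable {F : Type} [Field F]

/-- The composition `A ∘ f = ∑ aᵢ (a x + c)^i (b x + d)^{k-i}` for `A = [[a,b],[c,d]]`. -/
def mcirc (A : Matrix (Fin 2) (Fin 2) F) (f : F[X]) : F[X] :=
  ∑ i ∈ Finset.range (f.natDegree + 1),
    C (f.coeff i) * (C (A 0 0) * X + C (A 1 0)) ^ i *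
      (C (A 0 1) * X + C (A 1 1)) ^ (f.natDegree - i)

/-- The composition `[A] ∘ f`: the monic normalization of `A ∘ f`. -/
def pcirc (A : Matrix (Fin 2) (Fin 2) F) (f : F[X]) : F[X] :=
  C (mcirc A f).leadingCoeff⁻¹ * mcirc A f

/-- The subgroup of scalar matrices in `GL₂(F)`. -/
def scalarSub (F : Type) [Field F] : Subgroup (GL (Fin 2) F) :=
  (Units.map ((Matrix.scalar (Fin 2)).toMonoidHom : F →* Matrix (Fin 2) (Fin 2) F)).range

instance scalarSub_normal (F : Type) [Field F] : (scalarSub F).Normal := by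
  constructor
  intro n hn g
  obtain ⟨u, hu⟩ := hn
  refine ⟨u, ?_⟩
  ext : 1
  have hcomm : Commute ((Matrix.scalar (Fin 2)) (u : F)) (g : Matrix (Fin 2) (Fin 2) F) :=
    Matrix.scalar_commute _ (fun r' => Commute.all _ r') _
  have hval : (n : Matrix (Fin 2) (Fin 2) F) = (Matrix.scalar (Fin 2)) (u : F) := by
    rw [← hu]; rfl
  calc ((Units.map ((Matrix.scalar (Fin 2)).toMonoidHom : F →* Matrix (Fin 2) (Fin 2) F)) u :
        GL (Fin 2) F).val
      = (Matrix.scalar (Fin 2)) (u : F) := rfl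
    _ = (g : Matrix (Fin 2) (Fin 2) F) * (Matrix.scalar (Fin 2)) (u : F)
        * ((g⁻¹ : GL (Fin 2) F) : Matrix (Fin 2) (Fin 2) F) := by
        rw [← hcomm.eq, mul_assoc, ← Units.val_mul, mul_inv_cancel]
        simp
    _ = ((g * n * g⁻¹ : GL (Fin 2) F) : Matrix (Fin 2) (Fin 2) F) := by
        simp [Units.val_mul, hval]

/-- `PGL₂(F)`, the projective general linear group. -/
def PGL2 (F : Type) [Field F] : Type := GL (Fin 2) F ⧸ scalarSub F

instance : Group (PGL2 F) := inferInstanceAs (Group (GL (Fin 2) F ⧸ scalarSub F))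

/-- The natural projection `GL₂(F) → PGL₂(F)`, `A ↦ [A]`. -/
def toPGL (F : Type) [Field F] : GL (Fin 2) F →* PGL2 F := QuotientGroup.mk' (scalarSub F)

/-- The polynomial `F_{A,r} = b x^{q^r+1} - a x^{q^r} + d x - c`. -/
def FAr [Fintype F] (A : Matrix (Fin 2) (Fin 2) F) (r : ℕ) : F[X] :=
  C (A 0 1) * X ^ (Fintype.card F ^ r + 1) - C (A 0 0) * X ^ (Fintype.card F ^ r)
    + C (A 1 1) * X - C (A 1 0)


/-- The σ-product of `A = [[a,b],[c,d]]` and `A₀ = [[a₀,b₀],[c₀,d₀]]`. -/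
def sigmaProd (A A0 : Matrix (Fin 2) (Fin 2) F) : Matrix (Fin 2) (Fin 2) F :=
  !![-(A 0 1 * (A0 0 0 * A0 1 0) - A 0 0 * (A0 0 0 * A0 1 1) + A 1 1 * (A0 1 0 * A0 0 1)
        - A 1 0 * (A0 0 1 * A0 1 1)),
     A 0 1 * A0 0 0 ^ 2 - A 0 0 * (A0 0 0 * A0 0 1) + A 1 1 * (A0 0 0 * A0 0 1)
        - A 1 0 * A0 0 1 ^ 2;
     -(A 0 1 * A0 1 0 ^ 2 - A 0 0 * (A0 1 0 * A0 1 1) + A 1 1 * (A0 1 1 * A0 1 0)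
        - A 1 0 * A0 1 1 ^ 2),
     A 0 1 * (A0 0 0 * A0 1 0) - A 0 0 * (A0 1 0 * A0 0 1) + A 1 1 * (A0 1 1 * A0 0 0)
        - A 1 0 * (A0 0 1 * A0 1 1)]

end PGLAct



namespace NoInvAux

variable {F : Type} [Field F] {K : Type} [Field K] [Algebra F K]



/-- Cayley–Hamilton for 2×2 matrices. -/
lemma ch2 (N : Matrix (Fin 2) (Fin 2) F) :
    N * N = N.trace • N - N.det • (1 : Matrix (Fin 2) (Fin 2) F) := by
  ext i j
  fin_cases i <;> fin_cases j <;>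
    simp [Matrix.mul_apply, Fin.sum_univ_two, Matrix.trace_fin_two, Matrix.det_fin_two,
      Matrix.one_apply] <;> ring

lemma pow_succ_eq (N : Matrix (Fin 2) (Fin 2) F) (hdet : N.det = 0) (j : ℕ) :
    N ^ (j + 1) = N.trace ^ j • N := by
  induction j with
  | zero => simp
  | succ j ih =>
      rw [pow_succ, ih, Matrix.smul_mul]
      have h2 : N * N = N.trace • N := by rw [ch2, hdet]; simp
      rw [h2, smul_smul, pow_succ, mul_comm]

lemma nilpotent_sq (N : Matrix (Fin 2) (Fin 2) F) (k : ℕ) (hk : 1 ≤ k) (h : N ^ k = 0) :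
    N * N = 0 := by
  by_cases hN : N = 0
  · simp [hN]
  have hdet : N.det = 0 := by
    have : N.det ^ k = 0 := by rw [← Matrix.det_pow, h]; simp [Matrix.det_zero, (by omega : k ≠ 0)]
    exact pow_eq_zero_iff (by omega) |>.mp this
  obtain ⟨j, rfl⟩ : ∃ j, k = j + 1 := ⟨k - 1, by omega⟩
  rw [pow_succ_eq N hdet] at h
  have htr : N.trace ^ j = 0 := by
    by_contra htr
    exact hN (by simpa [htr, smul_eq_zero] using h)
  have : N.trace = 0 := pow_eq_zero_iff' |>.mp htr |>.1
  rw [ch2, hdet, this]; simp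




lemma frob_surj [Finite F] (p e : ℕ) [Fact p.Prime] [CharP F p] :
    Function.Surjective (fun x : F => x ^ p ^ e) := by
  apply Finite.injective_iff_surjective.mp
  intro x y hxy
  have : (x - y) ^ p ^ e = 0 := by rw [sub_pow_char_pow]; simpa using sub_eq_zero_of_eq hxy
  have := pow_eq_zero_iff (pow_ne_zero e (Fact.out : p.Prime).ne_zero) |>.mp this
  exact sub_eq_zero.mp this

lemma unip [Finite F] {p : ℕ} [Fact p.Prime] [CharP F p] (M : Matrix (Fin 2) (Fin 2) F)
    (e : ℕ) (l0 : F) (hl0 : l0 ≠ 0) (hM : M ^ p ^ e = l0 • 1) :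
    ∃ (l : F) (N : Matrix (Fin 2) (Fin 2) F), l ≠ 0 ∧ M = l • (1 + N) ∧ N * N = 0 := by
  obtain ⟨l, hl⟩ := frob_surj p e (F := F) l0
  simp only at hl
  have hlne : l ≠ 0 := by rintro rfl; apply hl0; rw [← hl]; simp [zero_pow (pow_ne_zero e (Fact.out : p.Prime).ne_zero)]
  set N : Matrix (Fin 2) (Fin 2) F := l⁻¹ • M - 1 with hN
  have hcomm : Commute (l⁻¹ • M) (1 : Matrix (Fin 2) (Fin 2) F) := Commute.one_right _
  have hNp : N ^ p ^ e = 0 := by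
    rw [hN, sub_pow_char_pow_of_commute _ _ hcomm, _root_.smul_pow, hM, one_pow, smul_smul, inv_pow,
      ← hl, inv_mul_cancel₀ (pow_ne_zero _ hlne), one_smul, sub_self]
  refine ⟨l, N, hlne, ?_, nilpotent_sq N (p ^ e) (Nat.one_le_pow _ _ (Fact.out : p.Prime).pos) hNp⟩
  rw [hN]
  simp [smul_smul, mul_inv_cancel₀ hlne]

lemma pow_p_scalar {p : ℕ} [Fact p.Prime] [CharP F p] (l : F)
    (N : Matrix (Fin 2) (Fin 2) F) (hN2 : N * N = 0) :
    (l • (1 + N)) ^ p = (l ^ p) • 1 := by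
  have hp2 : 2 ≤ p := (Fact.out : p.Prime).two_le
  have hNp : N ^ p = 0 := by
    have : N ^ p = N ^ (p - 2) * (N * N) := by
      rw [← pow_two, ← pow_add]; congr 1; omega
    rw [this, hN2, mul_zero]
  rw [_root_.smul_pow, add_pow_char_of_commute _ (Commute.one_left N), one_pow, hNp, add_zero]



/-- denominator of the Möbius action. -/
def den (K : Type) [Field K] [Algebra F K] (M : Matrix (Fin 2) (Fin 2) F) (x : K) : K :=
  algebraMap F K (M 0 1) * x + algebraMap F K (M 1 1)

/-- The Möbius action `x ↦ (a x + c)/(b x + d)`. -/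
def mob (K : Type) [Field K] [Algebra F K] (M : Matrix (Fin 2) (Fin 2) F) (x : K) : K :=
  (algebraMap F K (M 0 0) * x + algebraMap F K (M 1 0)) / den K M x

lemma frac_helper (A B C D u v : K) (hv : v ≠ 0) :
    (A * (u / v) + B) / (C * (u / v) + D) = (A * u + B * v) / (C * u + D * v) := by
  have h1 : A * (u / v) + B = (A * u + B * v) / v := by field_simp
  have h2 : C * (u / v) + D = (C * u + D * v) / v := by field_simp
  rw [h1, h2, div_div_div_cancel_right₀ hv]

lemma den_mul (M N : Matrix (Fin 2) (Fin 2) F) (β : K) (hN : den K N β ≠ 0) :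
    den K (N * M) β = den K M (mob K N β) * den K N β := by
  have h : den K M (mob K N β) * den K N β
      = algebraMap F K (M 0 1) * (algebraMap F K (N 0 0) * β + algebraMap F K (N 1 0))
        + algebraMap F K (M 1 1) * den K N β := by
    rw [den, mob, add_mul, ← mul_div_assoc, div_mul_cancel₀ _ hN]
  rw [h]
  simp only [den, Matrix.mul_apply, Fin.sum_univ_two, map_add, map_mul]
  ring

lemma mob_mul (M N : Matrix (Fin 2) (Fin 2) F) (β : K) (hN : den K N β ≠ 0) :
    mob K (N * M) β = mob K M (mob K N β) := by
  have hu : mob K M (mob K N β)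
      = (algebraMap F K (M 0 0) * (algebraMap F K (N 0 0) * β + algebraMap F K (N 1 0))
          + algebraMap F K (M 1 0) * den K N β)
        / (algebraMap F K (M 0 1) * (algebraMap F K (N 0 0) * β + algebraMap F K (N 1 0))
          + algebraMap F K (M 1 1) * den K N β) := by
    rw [mob, den, mob]
    exact frac_helper _ _ _ _ _ _ hN
  rw [hu, mob, den]
  congr 1 <;>
  · simp only [den, Matrix.mul_apply, Fin.sum_univ_two, map_add, map_mul]
    ring

lemma mob_inj (M : Matrix (Fin 2) (Fin 2) F) (hdet : M.det ≠ 0) (x y : K)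
    (hx : den K M x ≠ 0) (hy : den K M y ≠ 0) (h : mob K M x = mob K M y) : x = y := by
  rw [mob, mob, div_eq_div_iff hx hy] at h
  have hd : algebraMap F K M.det ≠ 0 :=
    (map_ne_zero_iff _ (algebraMap F K).injective).mpr hdet
  have hz : algebraMap F K M.det * (x - y) = 0 := by
    rw [Matrix.det_fin_two, map_sub, map_mul, map_mul]
    simp only [den] at hx hy h
    linear_combination h
  rcases mul_eq_zero.mp hz with h' | h'
  · exact absurd h' hd
  · exact sub_eq_zero.mp h'

lemma mob_hom (M : Matrix (Fin 2) (Fin 2) F) (ψ : K →ₐ[F] K) (β : K) :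
    ψ (mob K M β) = mob K M (ψ β) := by
  simp only [mob, den, map_div₀, map_add, map_mul, AlgHom.commutes]

lemma den_hom (M : Matrix (Fin 2) (Fin 2) F) (ψ : K →ₐ[F] K) (β : K) :
    ψ (den K M β) = den K M (ψ β) := by
  simp only [den, map_add, map_mul, AlgHom.commutes]

lemma mob_smul (l : F) (hl : l ≠ 0) (M : Matrix (Fin 2) (Fin 2) F) (β : K) :
    mob K (l • M) β = mob K M β := by
  have hφ : algebraMap F K l ≠ 0 := (map_ne_zero_iff _ (algebraMap F K).injective).mpr hl
  simp only [mob, den, Matrix.smul_apply, smul_eq_mul, map_mul]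
  rw [mul_assoc, mul_assoc, ← mul_add, ← mul_add, mul_div_mul_left _ _ hφ]

lemma mob_scalar_one (l : F) (hl : l ≠ 0) (β : K) :
    mob K ((l • 1 : Matrix (Fin 2) (Fin 2) F)) β = β := by
  rw [mob_smul l hl]
  simp [mob, den, Matrix.one_apply]





lemma root_not_range {f : F[X]} (hirr : Irreducible f) (hd : 2 ≤ f.natDegree)
    (β : K) (hβ : aeval β f = 0) : β ∉ Set.range (algebraMap F K) := by
  rintro ⟨x, rfl⟩
  rw [Polynomial.aeval_algebraMap_apply_eq_algebraMap_eval,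
    map_eq_zero_iff _ (algebraMap F K).injective] at hβ
  have hdvd : (X - C x) ∣ f := Polynomial.dvd_iff_isRoot.mpr hβ
  obtain ⟨c, hc⟩ := hdvd
  rcases hirr.isUnit_or_isUnit hc with h | h
  · exact Polynomial.not_isUnit_X_sub_C x h
  · have : f.natDegree = 1 := by
      rw [hc, Polynomial.natDegree_mul (Polynomial.X_sub_C_ne_zero x)
        (by rintro rfl; rw [mul_zero] at hc; exact hirr.ne_zero hc),
        Polynomial.natDegree_X_sub_C, Polynomial.natDegree_eq_zero_of_isUnit h]
    omega

lemma den_ne_zero (M : Matrix (Fin 2) (Fin 2) F) (hdet : M.det ≠ 0) (β : K)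
    (hnr : β ∉ Set.range (algebraMap F K)) : den K M β ≠ 0 := by
  intro h0
  by_cases hb : M 0 1 = 0
  · have hd11 : M 1 1 ≠ 0 := by
      intro h11; apply hdet; rw [Matrix.det_fin_two, hb, h11]; ring
    rw [den, hb, map_zero, zero_mul, zero_add] at h0
    exact hd11 ((map_eq_zero_iff _ (algebraMap F K).injective).mp h0)
  · apply hnr
    refine ⟨-(M 1 1) / (M 0 1), ?_⟩
    have hb' : algebraMap F K (M 0 1) ≠ 0 :=
      fun h => hb ((map_eq_zero_iff _ (algebraMap F K).injective).mp h)
    rw [den] at h0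
    rw [map_div₀, map_neg, div_eq_iff hb']
    linear_combination -h0

lemma rootmap {f : F[X]} (hf : f.Monic) (M : Matrix (Fin 2) (Fin 2) F)
    (hM : PGLAct.pcirc M f = f) (β : K) (hβ : aeval β f = 0)
    (hden : den K M β ≠ 0) : aeval (mob K M β) f = 0 := by
  have hne : PGLAct.mcirc M f ≠ 0 := by
    intro h0
    apply hf.ne_zero
    rw [← hM, PGLAct.pcirc, h0, mul_zero]
  have hlc : (PGLAct.mcirc M f).leadingCoeff ≠ 0 := Polynomial.leadingCoeff_ne_zero.mpr hne
  have hmc0 : C (PGLAct.mcirc M f).leadingCoeff * PGLAct.pcirc M f = PGLAct.mcirc M f := by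
    rw [PGLAct.pcirc, ← mul_assoc, ← C_mul, mul_inv_cancel₀ hlc, C_1, one_mul]
  have hmc : PGLAct.mcirc M f = C (PGLAct.mcirc M f).leadingCoeff * f := by
    conv_lhs => rw [← hmc0, hM]
  have h0 : aeval β (PGLAct.mcirc M f) = 0 := by
    rw [hmc, map_mul, aeval_C, hβ, mul_zero]
  rw [PGLAct.mcirc] at h0
  simp only [map_sum, map_mul, map_pow, aeval_C, aeval_X, map_add] at h0
  set u : K := algebraMap F K (M 0 0) * β + algebraMap F K (M 1 0) with hu
  set v : K := den K M β with hv
  have hsum : ∑ i ∈ Finset.range (f.natDegree + 1),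
      algebraMap F K (f.coeff i) * u ^ i * v ^ (f.natDegree - i)
      = v ^ f.natDegree * aeval (u / v) f := by
    rw [Polynomial.aeval_eq_sum_range, Finset.mul_sum]
    apply Finset.sum_congr rfl
    intro i hi
    have hin : i ≤ f.natDegree := by
      have := Finset.mem_range.mp hi; omega
    rw [Algebra.smul_def, div_pow, pow_sub₀ v hden hin]
    field_simp
  have : v ^ f.natDegree * aeval (u / v) f = 0 := by
    rw [← hsum, ← h0]
    apply Finset.sum_congr rfl
    intro i _
    rw [hv, den]
  rcases mul_eq_zero.mp this with h | h
  · exact absurd h (pow_ne_zero _ hden)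
  · exact h





/-- `x ↦ x^(q^j)` as an `F`-algebra hom, where `q = |F|`. -/
def qpow (F K : Type) [Field F] [Fintype F] [Field K] [Algebra F K] (p s : ℕ)
    [Fact p.Prime] [CharP K p] (hq : Fintype.card F = p ^ s) (j : ℕ) : K →ₐ[F] K :=
  { iterateFrobenius K p (s * j) with
    commutes' := fun x => by
      have : (algebraMap F K x) ^ p ^ (s * j) = algebraMap F K (x ^ p ^ (s * j)) :=
        (map_pow _ _ _).symm
      show (algebraMap F K x) ^ p ^ (s * j) = algebraMap F K x
      rw [this, pow_mul, ← hq, FiniteField.pow_card_pow] }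

lemma qpow_apply (p s : ℕ) [Fintype F] [Fact p.Prime] [CharP K p]
    (hq : Fintype.card F = p ^ s) (j : ℕ) (x : K) :
    qpow F K p s hq j x = x ^ Fintype.card F ^ j := by
  show x ^ p ^ (s * j) = x ^ Fintype.card F ^ j
  rw [pow_mul, ← hq]

lemma card_le_of_fixed [Fintype F] [Fintype K] {p s : ℕ} [Fact p.Prime] [CharP K p]
    (hq : Fintype.card F = p ^ s) {α : K} (htop : Algebra.adjoin F ({α} : Set K) = ⊤)
    {m : ℕ} (hm : 0 < m) (hfix : α ^ (Fintype.card F ^ m) = α) :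
    Fintype.card K ≤ Fintype.card F ^ m := by
  classical
  set ψ := qpow F K p s hq m with hψ
  have hall : ∀ x : K, x ^ Fintype.card F ^ m = x := by
    intro x
    have hsub : Algebra.adjoin F ({α} : Set K) ≤ AlgHom.equalizer ψ (AlgHom.id F K) := by
      apply Algebra.adjoin_le
      intro y hy
      rcases Set.mem_singleton_iff.mp hy with rfl
      show ψ y = y
      rw [hψ, qpow_apply, hfix]
    have hx : x ∈ AlgHom.equalizer ψ (AlgHom.id F K) := by
      rw [htop] at hsub; exact hsub (Algebra.mem_top)
    have := hx
    rw [AlgHom.mem_equalizer] at this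
    rw [← qpow_apply p s hq m x]
    exact this
  set Q := Fintype.card F ^ m with hQ
  have hQ1 : 1 < Q := Nat.one_lt_pow (by omega) (Fintype.one_lt_card)
  set g : K[X] := X ^ Q - X with hg
  have hgdeg : g.natDegree = Q := by
    rw [hg, Polynomial.natDegree_sub_eq_left_of_natDegree_lt] <;>
      simp [Polynomial.natDegree_X_pow, hQ1]
  have hgne : g ≠ 0 := by
    intro h; rw [h] at hgdeg; simp at hgdeg; omega
  have hsubset : (Finset.univ : Finset K) ⊆ g.roots.toFinset := by
    intro x _
    rw [Multiset.mem_toFinset, Polynomial.mem_roots hgne]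
    simp [hg, Polynomial.IsRoot, hall x, sub_eq_zero]
  calc Fintype.card K = (Finset.univ : Finset K).card := rfl
    _ ≤ g.roots.toFinset.card := Finset.card_le_card hsubset
    _ ≤ Multiset.card g.roots := Multiset.toFinset_card_le _
    _ ≤ g.natDegree := Polynomial.card_roots' g
    _ = Q := hgdeg

lemma fixed_scalar (N : Matrix (Fin 2) (Fin 2) F) (hN2 : N * N = 0) (β : K)
    (hnr : β ∉ Set.range (algebraMap F K)) (hden : den K (1 + N) β ≠ 0)
    (hfix : mob K (1 + N) β = β) : N = 0 := by
  have h00 : N 0 0 * N 0 0 + N 0 1 * N 1 0 = 0 := by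
    have := congrFun (congrFun hN2 0) 0
    simpa [Matrix.mul_apply, Fin.sum_univ_two] using this
  have h01 : N 0 0 * N 0 1 + N 0 1 * N 1 1 = 0 := by
    have := congrFun (congrFun hN2 0) 1
    simpa [Matrix.mul_apply, Fin.sum_univ_two] using this
  have h11 : N 1 0 * N 0 1 + N 1 1 * N 1 1 = 0 := by
    have := congrFun (congrFun hN2 1) 1
    simpa [Matrix.mul_apply, Fin.sum_univ_two] using this
  set φ := algebraMap F K with hφ
  have hinj := (algebraMap F K).injective
  rw [mob, div_eq_iff hden] at hfix
  rw [den] at hfix hden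
  simp only [Matrix.add_apply, Matrix.one_apply, if_pos, if_neg, one_ne_zero] at hfix hden
  norm_num at hfix hden
  -- hfix : φ (1 + N 0 0) * β + φ (N 1 0) = β * (φ (N 0 1) * β + φ (1 + N 1 1))
  by_cases hb : N 0 1 = 0
  · have e00 : N 0 0 = 0 := by
      have : N 0 0 * N 0 0 = 0 := by rw [← h00, hb]; ring
      exact pow_eq_zero_iff (n := 2) (by omega) |>.mp (by rw [pow_two]; exact this)
    have e11 : N 1 1 = 0 := by
      have : N 1 1 * N 1 1 = 0 := by rw [← h11, hb]; ring
      exact pow_eq_zero_iff (n := 2) (by omega) |>.mp (by rw [pow_two]; exact this)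
    have e10 : N 1 0 = 0 := by
      apply hinj
      rw [map_zero]
      rw [hb, e00, e11] at hfix
      simp only [map_zero, map_one, add_zero, zero_add, zero_mul] at hfix
      linear_combination hfix
    ext i j
    fin_cases i <;> fin_cases j <;> simp [hb, e00, e11, e10]
  · exfalso
    apply hnr
    refine ⟨N 0 0 / N 0 1, ?_⟩
    have hb' : φ (N 0 1) ≠ 0 := fun h => hb (hinj (by rw [h, map_zero]))
    rw [map_div₀, div_eq_iff hb', hφ]
    have e11 : N 1 1 = -(N 0 0) := by
      have : N 0 1 * (N 0 0 + N 1 1) = 0 := by linear_combination h01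
      rcases mul_eq_zero.mp this with h | h
      · exact absurd h hb
      · linear_combination h
    have hK00 : φ (N 0 0) * φ (N 0 0) + φ (N 0 1) * φ (N 1 0) = 0 := by
      rw [← map_mul, ← map_mul, ← map_add, h00, map_zero]
    have hquad : φ (N 0 1) * β ^ 2 - 2 * φ (N 0 0) * β - φ (N 1 0) = 0 := by
      rw [e11] at hfix
      simp only [map_add, map_one, map_neg] at hfix
      linear_combination -hfix
    have hsq : (φ (N 0 1) * β - φ (N 0 0)) ^ 2 = 0 := by
      linear_combination φ (N 0 1) * hquad + hK00
    have := pow_eq_zero_iff (n := 2) (by omega) |>.mp hsq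
    linear_combination -this


lemma mob_one (β : K) : mob K (1 : Matrix (Fin 2) (Fin 2) F) β = β := by
  simp [mob, den, Matrix.one_apply]

end NoInvAux

open NoInvAux in
/-- If `G ≤ PGL₂(F_q)` has order `p^r` with `r ≥ 2` (`q` a power of the
prime `p`), then no monic irreducible polynomial of degree `≥ 2` is `G`-invariant. -/
theorem no_invariant_p_group {F : Type} [Field F] [Fintype F] (p : ℕ) (hp : p.Prime)
    (hq : ∃ s : ℕ, 0 < s ∧ Fintype.card F = p ^ s)
    (G : Subgroup (PGLAct.PGL2 F)) (r : ℕ) (hr : 2 ≤ r) (hG : Nat.card G = p ^ r) :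
    ¬ ∃ f : F[X], f.Monic ∧ Irreducible f ∧ 2 ≤ f.natDegree ∧
      ∀ A : GL (Fin 2) F, PGLAct.toPGL F A ∈ G → PGLAct.pcirc A.val f = f := by
  classical
  rintro ⟨f, hmonic, hirr, hdeg, hinv⟩
  obtain ⟨s, hs, hqs⟩ := hq
  haveI hfact : Fact p.Prime := ⟨hp⟩
  -- characteristic of F is p
  haveI hcharF : CharP F p := by
    haveI := ringChar.charP F
    obtain ⟨k, hk1, hk2⟩ := FiniteField.card F (ringChar F)
    have hpc : p = ringChar F := by
      have h1 : p ∣ ringChar F ^ (k : ℕ) := by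
        rw [← hk2, hqs]; exact dvd_pow_self p (by omega)
      exact (Nat.prime_dvd_prime_iff_eq hp hk1).mp (hp.dvd_of_dvd_pow h1)
    exact hpc ▸ ringChar.charP F
  haveI : Fact (Irreducible f) := ⟨hirr⟩
  set n := f.natDegree with hn
  set K := AdjoinRoot f with hK
  haveI : Module.Finite F K := Module.Finite.of_basis (AdjoinRoot.powerBasis hmonic.ne_zero).basis
  haveI : Finite K := Module.finite_of_finite F
  haveI : Fintype K := Fintype.ofFinite K
  haveI : CharP K p := charP_of_injective_algebraMap (algebraMap F K).injective p
  set q := Fintype.card F with hqdef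
  have hq2 : 1 < q := Fintype.one_lt_card
  have hfinrank : Module.finrank F K = n := by
    rw [(AdjoinRoot.powerBasis hmonic.ne_zero).finrank]; rfl
  have hcardK : Fintype.card K = q ^ n := by
    rw [Module.card_eq_pow_finrank (K := F) (V := K), hfinrank]
  set α : K := AdjoinRoot.root f with hα
  have hroot : aeval α f = 0 := by
    rw [aeval_def, AdjoinRoot.algebraMap_eq]; exact AdjoinRoot.eval₂_root f
  have htop : Algebra.adjoin F ({α} : Set K) = ⊤ := AdjoinRoot.adjoinRoot_eq_top
  -- no small fixed exponent
  have hnofix : ∀ m : ℕ, 0 < m → m < n → α ^ q ^ m ≠ α := by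
    intro m hm hmn hfix
    have h1 := card_le_of_fixed (p := p) (s := s) hqs htop hm hfix
    rw [hcardK] at h1
    exact absurd h1 (not_le.mpr (Nat.pow_lt_pow_right hq2 hmn))
  -- power reduction modulo n
  have hred : ∀ (x : K) (a : ℕ), x ^ q ^ a = x ^ q ^ (a % n) := by
    intro x a
    have hcard : ∀ (y : K) (t : ℕ), y ^ (q ^ n) ^ t = y := by
      intro y t; rw [← hcardK]; exact FiniteField.pow_card_pow t y
    have he : q ^ (a % n) * (q ^ n) ^ (a / n) = q ^ a := by
      rw [← pow_mul, ← pow_add, Nat.mod_add_div]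
    calc x ^ q ^ a = (x ^ q ^ (a % n)) ^ ((q ^ n) ^ (a / n)) := by rw [← pow_mul, he]
      _ = x ^ q ^ (a % n) := hcard _ _
  have hdvdn : ∀ a : ℕ, α ^ q ^ a = α → n ∣ a := by
    intro a ha
    rw [hred α a] at ha
    rcases Nat.eq_zero_or_pos (a % n) with h | h
    · exact Nat.dvd_of_mod_eq_zero h
    · exact absurd ha (hnofix _ h (Nat.mod_lt _ (by omega)))
  -- distinctness of conjugates
  have hdist : ∀ i j : ℕ, i < n → j < n → α ^ q ^ i = α ^ q ^ j → i = j := by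
    have key : ∀ i j : ℕ, i < j → j < n → α ^ q ^ i = α ^ q ^ j → False := by
      intro i j hij hjn he
      have hψ : (qpow F K p s hqs i) (α ^ q ^ (j - i)) = (qpow F K p s hqs i) α := by
        rw [qpow_apply, qpow_apply, ← pow_mul]
        rw [show q ^ (j - i) * q ^ i = q ^ j from by rw [← pow_add]; congr 1; omega]
        exact he.symm
      have h2 : (qpow F K p s hqs i).toRingHom (α ^ q ^ (j - i))
          = (qpow F K p s hqs i).toRingHom α := hψ
      have := (qpow F K p s hqs i).toRingHom.injective h2
      exact hnofix (j - i) (by omega) (by omega) this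
    intro i j hi hj he
    rcases lt_trichotomy i j with h | h | h
    · exact absurd he (fun he => key i j h hj he)
    · exact h
    · exact absurd he.symm (fun he => key j i h hi he)
  -- classification of roots of f in K
  have hclass : ∀ β : K, aeval β f = 0 → ∃ i, i < n ∧ β = α ^ q ^ i := by
    intro β hβ
    have hrooti : ∀ i : ℕ, aeval (α ^ q ^ i) f = 0 := by
      intro i
      rw [← qpow_apply p s hqs i α, Polynomial.aeval_algHom_apply, hroot, map_zero]
    set R : Finset K := (Finset.range n).image (fun i => α ^ q ^ i) with hR
    have hRcard : R.card = n := by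
      rw [hR, Finset.card_image_of_injOn, Finset.card_range]
      intro i hi j hj hij
      exact hdist i j (Finset.mem_range.mp (by exact hi)) (Finset.mem_range.mp (by exact hj)) hij
    have hle : R.val ≤ f.aroots K := by
      rw [Multiset.le_iff_subset R.nodup]
      intro x hx
      obtain ⟨i, hi, rfl⟩ := Finset.mem_image.mp (Finset.mem_val.mp hx)
      rw [Polynomial.mem_aroots]
      exact ⟨hmonic.ne_zero, hrooti i⟩
    have hcard2 : Multiset.card (f.aroots K) ≤ n := by
      calc Multiset.card (f.aroots K) ≤ (f.map (algebraMap F K)).natDegree :=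
            Polynomial.card_roots' _
        _ = n := hmonic.natDegree_map _
    have heq : R.val = f.aroots K :=
      Multiset.eq_of_le_of_card_le hle (by rw [show Multiset.card R.val = R.card from rfl, hRcard]; exact hcard2)
    have hβm : β ∈ f.aroots K := Polynomial.mem_aroots.mpr ⟨hmonic.ne_zero, hβ⟩
    rw [← heq] at hβm
    obtain ⟨i, hi, hix⟩ := Finset.mem_image.mp (Finset.mem_val.mp hβm)
    exact ⟨i, Finset.mem_range.mp hi, hix.symm⟩
  -- lifting machinery
  have hsur : Function.Surjective (PGLAct.toPGL F) := QuotientGroup.mk'_surjective _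
  have hnrr : ∀ β : K, aeval β f = 0 → β ∉ Set.range (algebraMap F K) :=
    fun β hβ => root_not_range hirr hdeg β hβ
  have hnrα : α ∉ Set.range (algebraMap F K) := hnrr α hroot
  have hsmul_one : ∀ x : F, (Matrix.scalar (Fin 2)) x = x • (1 : Matrix (Fin 2) (Fin 2) F) := by
    intro x; rw [Matrix.scalar_apply]; ext i j
    by_cases h : i = j <;> simp [Matrix.diagonal_apply, Matrix.one_apply, h]
  have hdet : ∀ B : GL (Fin 2) F, (B.val).det ≠ 0 := by
    intro B
    exact ((Matrix.isUnit_iff_isUnit_det _).mp B.isUnit).ne_zero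
  have hscal : ∀ B : GL (Fin 2) F, PGLAct.toPGL F B ∈ G →
      ∃ l0 : F, l0 ≠ 0 ∧ B.val ^ (p ^ r) = l0 • 1 := by
    intro B hB
    have h1 : PGLAct.toPGL F (B ^ (p ^ r)) = 1 := by
      rw [map_pow]
      have h0 : (⟨PGLAct.toPGL F B, hB⟩ : ↥G) ^ (p ^ r) = 1 := by
        rw [← hG]; exact pow_card_eq_one'
      have := congrArg Subtype.val h0
      simpa using this
    have h2 : B ^ (p ^ r) ∈ PGLAct.scalarSub F := (QuotientGroup.eq_one_iff _).mp h1
    obtain ⟨u, hu⟩ := h2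
    refine ⟨u.val, u.ne_zero, ?_⟩
    have hval : ((B ^ (p ^ r) : GL (Fin 2) F) : Matrix (Fin 2) (Fin 2) F)
        = Matrix.scalar (Fin 2) u.val := by rw [← hu]; rfl
    rw [← Units.val_pow_eq_pow_val, hval, hsmul_one]
  have hstruct : ∀ B : GL (Fin 2) F, PGLAct.toPGL F B ∈ G →
      ∃ (l : F) (N : Matrix (Fin 2) (Fin 2) F), l ≠ 0 ∧ B.val = l • (1 + N) ∧ N * N = 0 := by
    intro B hB
    obtain ⟨l0, hl0, hBp⟩ := hscal B hB
    exact unip B.val r l0 hl0 hBp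
  have hMp : ∀ B : GL (Fin 2) F, PGLAct.toPGL F B ∈ G →
      ∃ lp : F, lp ≠ 0 ∧ B.val ^ p = lp • 1 := by
    intro B hB
    obtain ⟨l, N, hl, hBval, hN2⟩ := hstruct B hB
    exact ⟨l ^ p, pow_ne_zero _ hl, by rw [hBval]; exact pow_p_scalar l N hN2⟩
  have hfix_scalar : ∀ B : GL (Fin 2) F, PGLAct.toPGL F B ∈ G → mob K B.val α = α →
      PGLAct.toPGL F B = 1 := by
    intro B hB hfix
    obtain ⟨l, N, hl, hBval, hN2⟩ := hstruct B hB
    have hdet1N : (1 + N : Matrix (Fin 2) (Fin 2) F).det ≠ 0 := by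
      intro h0; apply hdet B; rw [hBval, Matrix.det_smul, h0, mul_zero]
    have hden1N : den K (1 + N) α ≠ 0 := den_ne_zero _ hdet1N α hnrα
    have hfix' : mob K (1 + N) α = α := by rw [← mob_smul l hl, ← hBval]; exact hfix
    have hN0 : N = 0 := fixed_scalar N hN2 α hnrα hden1N hfix'
    have hBs : B.val = l • 1 := by rw [hBval, hN0, add_zero]
    have hmem : B ∈ PGLAct.scalarSub F := by
      refine ⟨Units.mk0 l hl, ?_⟩
      apply Units.ext
      show Matrix.scalar (Fin 2) l = B.val
      rw [hBs, hsmul_one]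
    exact (QuotientGroup.eq_one_iff B).mpr hmem
  have hrootmob : ∀ B : GL (Fin 2) F, PGLAct.toPGL F B ∈ G → ∀ β : K, aeval β f = 0 →
      aeval (mob K B.val β) f = 0 :=
    fun B hB β hβ => rootmap hmonic _ (hinv B hB) β hβ (den_ne_zero _ (hdet B) β (hnrr β hβ))
  -- choose lifts
  have hAex : ∀ g : ↥G, ∃ B : GL (Fin 2) F, PGLAct.toPGL F B = g.val := fun g => hsur g.val
  choose A hA using hAex
  have hAmem : ∀ g : ↥G, PGLAct.toPGL F (A g) ∈ G := fun g => by rw [hA g]; exact g.2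
  -- index of each group element
  have hIdx : ∀ g : ↥G, ∃ i, i < n ∧ mob K (A g).val α = α ^ q ^ i :=
    fun g => hclass _ (hrootmob (A g) (hAmem g) α hroot)
  choose I hIlt hImob using hIdx
  -- mob at matrix powers
  have hpowmob : ∀ g : ↥G, ∀ k : ℕ, mob K ((A g).val ^ k) α = α ^ q ^ (k * I g) := by
    intro g k
    induction k with
    | zero => rw [pow_zero, mob_one]; simp
    | succ k ih =>
        have hdetk : (((A g).val) ^ k).det ≠ 0 := by
          rw [Matrix.det_pow]; exact pow_ne_zero _ (hdet (A g))
        have hdenk : den K ((A g).val ^ k) α ≠ 0 := den_ne_zero _ hdetk α hnrα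
        rw [pow_succ, mob_mul _ _ _ hdenk, ih]
        have hcomm := (mob_hom (A g).val (qpow F K p s hqs (k * I g)) α).symm
        rw [qpow_apply, qpow_apply] at hcomm
        rw [hcomm, hImob g, ← pow_mul, ← pow_add]
        congr 1
        ring
  -- divisibility
  have hdvdpI : ∀ g : ↥G, n ∣ p * I g := by
    intro g
    obtain ⟨lp, hlp, hplp⟩ := hMp (A g) (hAmem g)
    have h1 := hpowmob g p
    rw [hplp, mob_scalar_one lp hlp] at h1
    exact hdvdn _ h1.symm
  -- injectivity
  have hinjI : ∀ g₁ g₂ : ↥G, I g₁ = I g₂ → g₁ = g₂ := by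
    intro g₁ g₂ hI
    have hmm : mob K (A g₁).val α = mob K (A g₂).val α := by
      rw [hImob g₁, hImob g₂, hI]
    set B : GL (Fin 2) F := A g₁ * (A g₂)⁻¹ with hB
    have hBmem : PGLAct.toPGL F B ∈ G := by
      rw [hB, map_mul, map_inv, hA g₁, hA g₂]
      exact mul_mem g₁.2 (inv_mem g₂.2)
    have hdenB : den K B.val α ≠ 0 := den_ne_zero _ (hdet B) α hnrα
    have hprod : (B * A g₂ : GL (Fin 2) F) = A g₁ := by
      rw [hB, inv_mul_cancel_right]
    have hcomp : mob K (B.val * (A g₂).val) α = mob K (A g₂).val (mob K B.val α) :=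
      mob_mul _ _ _ hdenB
    have hval : B.val * (A g₂).val = (A g₁).val := by rw [← Units.val_mul, hprod]
    rw [hval] at hcomp
    have h3 : mob K (A g₂).val (mob K B.val α) = mob K (A g₂).val α := by
      rw [← hcomp, hmm]
    have hrootB : aeval (mob K B.val α) f = 0 := hrootmob B hBmem α hroot
    have hden2 : den K (A g₂).val (mob K B.val α) ≠ 0 :=
      den_ne_zero _ (hdet _) _ (hnrr _ hrootB)
    have hdenα : den K (A g₂).val α ≠ 0 := den_ne_zero _ (hdet _) α hnrα
    have h4 : mob K B.val α = α := mob_inj _ (hdet _) _ _ hden2 hdenα h3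
    have h5 : PGLAct.toPGL F B = 1 := hfix_scalar B hBmem h4
    rw [hB, map_mul, map_inv, hA g₁, hA g₂] at h5
    exact Subtype.ext (mul_inv_eq_one.mp h5)
  -- counting
  set S : Finset ℕ := (Finset.range n).filter (fun i => n ∣ p * i) with hS
  have hmaps : ∀ g : ↥G, I g ∈ S := fun g =>
    Finset.mem_filter.mpr ⟨Finset.mem_range.mpr (hIlt g), hdvdpI g⟩
  have hcard1 : Nat.card ↥G ≤ S.card := by
    have hinj' : Function.Injective (fun g : ↥G => (⟨I g, hmaps g⟩ : {x // x ∈ S})) := by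
      intro g₁ g₂ h
      exact hinjI g₁ g₂ (congrArg Subtype.val h)
    calc Nat.card ↥G ≤ Nat.card {x // x ∈ S} := Nat.card_le_card_of_injective _ hinj'
      _ = S.card := Nat.card_eq_finsetCard S
  have hcard2 : S.card ≤ p := by
    have hle : S.card ≤ (Finset.range p).card := by
      apply Finset.card_le_card_of_injOn (fun i => p * i / n)
      · intro i hi
        obtain ⟨hi1, hi2⟩ := Finset.mem_filter.mp hi
        rw [Finset.mem_range] at hi1; simp only [Finset.coe_range, Set.mem_Iio]
        have hn0 : 0 < n := by omega
        rw [Nat.div_lt_iff_lt_mul hn0]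
        exact (Nat.mul_lt_mul_left hp.pos).mpr hi1
      · intro i hi j hj hij
        obtain ⟨_, hdi⟩ := Finset.mem_filter.mp (Finset.mem_coe.mp hi)
        obtain ⟨_, hdj⟩ := Finset.mem_filter.mp (Finset.mem_coe.mp hj)
        have h1 : n * (p * i / n) = p * i := Nat.mul_div_cancel' hdi
        have h2 : n * (p * j / n) = p * j := Nat.mul_div_cancel' hdj
        have h3 : p * i = p * j := by rw [← h1, ← h2]; simp only at hij; rw [hij]
        exact Nat.eq_of_mul_eq_mul_left hp.pos h3
    rw [Finset.card_range] at hle; exact hle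
  rw [hG] at hcard1
  have hA1 : p ^ r ≤ p := le_trans hcard1 hcard2
  have hA2 : p < p ^ 2 := by nlinarith [hp.two_le]
  have hA3 : p ^ 2 ≤ p ^ r := Nat.pow_le_pow_right (le_of_lt hp.one_lt) hr
  omega
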